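/- Let T and T′ be trees, each with at least two vertices, in each of which no two essential vertices are adjacent, and suppose there is a bijection φ from the set of essential vertices of T to the set of essential vertices of T′ satisfying deg_{T′}(φ(v)) = deg_T(v) for all essential v. Then for every natural number i not exceeding the number of essential vertices of T, the maximum over i-element sets S of essential vertices of T of the number of connected components of T − S equals the corresponding maximum for T′. (This is the invariance of Δ_G^i under degree-sequence-preserving changes of the tree, which underlies Corollary B of the paper.) -/

import Mathlib

open SimpleGraph Finset

private lemma walk_trichotomy {V : Type*} {G : SimpleGraph V} (u v : V)
    {x y : V} (p : G.Walk x y) :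
    (G.deleteEdges {s(u,v)}).Reachable x y ∨
    ((G.deleteEdges {s(u,v)}).Reachable x u ∧ (G.deleteEdges {s(u,v)}).Reachable v y) ∨
    ((G.deleteEdges {s(u,v)}).Reachable x v ∧ (G.deleteEdges {s(u,v)}).Reachable u y) := by
  induction p with
  | nil => exact Or.inl (Reachable.refl _)
  | @cons a b c h q ih =>
    by_cases he : s(a, b) = s(u, v)
    · rw [Sym2.eq_iff] at he
      rcases he with ⟨rfl, rfl⟩ | ⟨rfl, rfl⟩
      · rcases ih with h1 | ⟨h2, h2'⟩ | ⟨h3, h3'⟩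
        · exact Or.inr (Or.inl ⟨Reachable.refl _, h1⟩)
        · exact Or.inr (Or.inl ⟨Reachable.refl _, h2'⟩)
        · exact Or.inl h3'
      · rcases ih with h1 | ⟨h2, h2'⟩ | ⟨h3, h3'⟩
        · exact Or.inr (Or.inr ⟨Reachable.refl _, h1⟩)
        · exact Or.inl h2'
        · exact Or.inr (Or.inr ⟨Reachable.refl _, h3'⟩)
    · have hab : (G.deleteEdges {s(u,v)}).Adj a b := by
        rw [SimpleGraph.deleteEdges_adj]
        exact ⟨h, by simpa using he⟩
      rcases ih with h1 | ⟨h2, h2'⟩ | ⟨h3, h3'⟩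
      · exact Or.inl (hab.reachable.trans h1)
      · exact Or.inr (Or.inl ⟨hab.reachable.trans h2, h2'⟩)
      · exact Or.inr (Or.inr ⟨hab.reachable.trans h3, h3'⟩)

private lemma euler_forest {V : Type*} [Fintype V] :
    ∀ (n : ℕ) (G : SimpleGraph V), Nat.card G.edgeSet = n → G.IsAcyclic →
      Nat.card G.ConnectedComponent + n = Fintype.card V := by
  classical
  intro n
  induction n with
  | zero =>
    intro G hn _
    have hempty : IsEmpty G.edgeSet := by
      rcases Nat.card_eq_zero.mp hn with h | h
      · exact h
      · exact absurd h (by exact not_infinite_iff_finite.mpr (Set.toFinite _))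
    have hbot : G = ⊥ := by
      rw [← SimpleGraph.edgeSet_eq_empty]
      exact Set.isEmpty_coe_sort.mp hempty
    subst hbot
    have hbij : Function.Bijective ((⊥ : SimpleGraph V).connectedComponentMk) := by
      constructor
      · intro a b hab
        exact (SimpleGraph.reachable_bot).mp (SimpleGraph.ConnectedComponent.exact hab)
      · intro c
        obtain ⟨w, hw⟩ := c.exists_rep
        exact ⟨w, hw⟩
    rw [add_zero, ← Nat.card_eq_fintype_card]
    exact (Nat.card_eq_of_bijective _ hbij).symm
  | succ n ih =>
    intro G hn hG
    have hne : Nonempty G.edgeSet := (Nat.card_pos_iff.mp (by omega)).1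
    obtain ⟨e, he⟩ := hne
    revert he
    induction e using Sym2.ind with
    | _ u v =>
    intro he
    have huv : G.Adj u v := (G.mem_edgeSet).mp he
    set G' := G.deleteEdges {s(u, v)} with hG'def
    have hle : G' ≤ G := SimpleGraph.deleteEdges_le _
    have hnreach : ¬ G'.Reachable u v := by
      have := (SimpleGraph.isAcyclic_iff_forall_edge_isBridge.mp hG) he
      exact SimpleGraph.isBridge_iff.mp this
    have hG'acyc : G'.IsAcyclic := fun a c hc => hG (c.mapLe hle) (hc.mapLe hle)
    have hcard' : Nat.card G'.edgeSet = n := by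
      have h1 : G'.edgeSet = G.edgeSet \ {s(u,v)} := SimpleGraph.edgeSet_deleteEdges _
      rw [Nat.card_coe_set_eq, h1, ← Nat.succ_inj, Nat.succ_eq_add_one,
        Set.ncard_diff_singleton_add_one he (Set.toFinite _)]
      rw [Nat.card_coe_set_eq] at hn
      exact hn
    have hih := ih G' hcard' hG'acyc
    -- now count components
    let m : G'.ConnectedComponent → G.ConnectedComponent :=
      SimpleGraph.ConnectedComponent.map (SimpleGraph.Hom.ofLE hle)
    have hm_mk : ∀ x : V, m (G'.connectedComponentMk x) = G.connectedComponentMk x :=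
      fun x => SimpleGraph.ConnectedComponent.map_mk _ _
    let F : G'.ConnectedComponent → Option G.ConnectedComponent :=
      fun c => if c = G'.connectedComponentMk v then none else some (m c)
    have hbij : Function.Bijective F := by
      constructor
      · intro c1 c2 h12
        by_cases h1 : c1 = G'.connectedComponentMk v
        · by_cases h2 : c2 = G'.connectedComponentMk v
          · rw [h1, h2]
          · simp only [F, if_pos h1, if_neg h2] at h12
            exact absurd h12 (by simp)
        · by_cases h2 : c2 = G'.connectedComponentMk v
          · simp only [F, if_pos h2, if_neg h1] at h12
            exact absurd h12 (by simp)
          · simp only [F, if_neg h1, if_neg h2, Option.some.injEq] at h12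
            obtain ⟨x, rfl⟩ := c1.exists_rep
            obtain ⟨y, rfl⟩ := c2.exists_rep
            have h12' : G.connectedComponentMk x = G.connectedComponentMk y := by
              rw [← hm_mk x, ← hm_mk y]; exact h12
            obtain ⟨p⟩ := SimpleGraph.ConnectedComponent.exact h12'
            rcases walk_trichotomy u v p with hr | ⟨_, hr2⟩ | ⟨hr3, _⟩
            · exact SimpleGraph.ConnectedComponent.sound hr
            · exact absurd (SimpleGraph.ConnectedComponent.sound hr2.symm) h2
            · exact absurd (SimpleGraph.ConnectedComponent.sound hr3) h1
      · rintro (_ | c)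
        · exact ⟨G'.connectedComponentMk v, by simp [F]⟩
        · obtain ⟨x, rfl⟩ := c.exists_rep
          by_cases hxu : G.Reachable x u
          · refine ⟨G'.connectedComponentMk u, ?_⟩
            have hne' : G'.connectedComponentMk u ≠ G'.connectedComponentMk v :=
              fun h => hnreach (SimpleGraph.ConnectedComponent.exact h)
            simp only [F, hne', if_neg, reduceIte, hm_mk, Option.some.injEq]
            exact congrArg some (SimpleGraph.ConnectedComponent.sound hxu.symm)
          · refine ⟨G'.connectedComponentMk x, ?_⟩
            have hne' : G'.connectedComponentMk x ≠ G'.connectedComponentMk v := by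
              intro h
              exact hxu (((SimpleGraph.ConnectedComponent.exact h).mono hle).trans
                huv.reachable.symm)
            simp only [F, hne', if_neg, reduceIte, hm_mk]
            rfl
    have hopt : Nat.card G'.ConnectedComponent = Nat.card G.ConnectedComponent + 1 := by
      rw [Nat.card_eq_of_bijective F hbij, Finite.card_option]
    omega

private lemma induced_edges {V : Type*} [Fintype V] [DecidableEq V] (G : SimpleGraph V)
    [DecidableRel G.Adj] (S : Finset V) (hind : ∀ u ∈ S, ∀ v ∈ S, ¬ G.Adj u v) :
    Nat.card (G.induce ((↑S : Set V)ᶜ)).edgeSet + ∑ v ∈ S, G.degree v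
      = Nat.card G.edgeSet := by
  classical
  set B : Finset (Sym2 V) := S.biUnion (fun v => G.incidenceFinset v) with hB
  have hBsub : B ⊆ G.edgeFinset := by
    intro e he
    rw [hB, Finset.mem_biUnion] at he
    obtain ⟨a, _, hae⟩ := he
    rw [SimpleGraph.mem_incidenceFinset] at hae
    exact SimpleGraph.mem_edgeFinset.mpr hae.1
  have hBcard : B.card = ∑ v ∈ S, G.degree v := by
    rw [hB, Finset.card_biUnion]
    · exact Finset.sum_congr rfl fun v _ => G.card_incidenceFinset_eq_degree v
    · intro a ha b hb hab
      rw [Function.onFun, Finset.disjoint_left]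
      intro e hea heb
      rw [SimpleGraph.mem_incidenceFinset] at hea heb
      have he : e = s(a, b) := (Sym2.mem_and_mem_iff hab).mp ⟨hea.2, heb.2⟩
      subst he
      exact hind a ha b hb ((G.mem_edgeSet).mp hea.1)
  have hsplit : (G.edgeFinset \ B).card + B.card = G.edgeFinset.card :=
    Finset.card_sdiff_add_card_eq_card hBsub
  have hbij : Function.Bijective
      (fun e : (G.induce ((↑S : Set V)ᶜ)).edgeSet =>
        (⟨Sym2.map Subtype.val e.1, by
          obtain ⟨e, he⟩ := e
          induction e using Sym2.ind with
          | _ a b =>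
            have hadj : G.Adj a.1 b.1 := he
            rw [Finset.mem_sdiff]
            constructor
            · simpa [SimpleGraph.mem_edgeFinset] using hadj
            · intro hmem
              rw [hB, Finset.mem_biUnion] at hmem
              obtain ⟨c, hcS, hce⟩ := hmem
              rw [SimpleGraph.mem_incidenceFinset] at hce
              have : c = a.1 ∨ c = b.1 := by
                simpa [Sym2.mem_iff] using hce.2
              rcases this with rfl | rfl
              · exact a.2 hcS
              · exact b.2 hcS⟩ :
          {x // x ∈ G.edgeFinset \ B})) := by
    constructor
    · rintro ⟨e1, he1⟩ ⟨e2, he2⟩ h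
      simp only [Subtype.mk.injEq] at h ⊢
      exact Sym2.map.injective Subtype.val_injective h
    · rintro ⟨e, he⟩
      induction e using Sym2.ind with
      | _ a b =>
        rw [Finset.mem_sdiff, SimpleGraph.mem_edgeFinset, SimpleGraph.mem_edgeSet] at he
        obtain ⟨hadj, hnB⟩ := he
        have haS : a ∉ S := by
          intro haS
          exact hnB (by
            rw [hB, Finset.mem_biUnion]
            exact ⟨a, haS, by
              rw [SimpleGraph.mem_incidenceFinset]
              exact ⟨(G.mem_edgeSet).mpr hadj, Sym2.mem_mk_left _ _⟩⟩)
        have hbS : b ∉ S := by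
          intro hbS
          exact hnB (by
            rw [hB, Finset.mem_biUnion]
            exact ⟨b, hbS, by
              rw [SimpleGraph.mem_incidenceFinset]
              exact ⟨(G.mem_edgeSet).mpr hadj, Sym2.mem_mk_right _ _⟩⟩)
        refine ⟨⟨s(⟨a, haS⟩, ⟨b, hbS⟩), ?_⟩, rfl⟩
        exact hadj
  rw [Nat.card_eq_of_bijective _ hbij, Nat.card_eq_finsetCard, ← hBcard, hsplit,
    SimpleGraph.edgeFinset, Nat.card_coe_set_eq, Set.ncard_eq_toFinset_card']

private lemma comp_count {V : Type*} [Fintype V] [DecidableEq V] (G : SimpleGraph V)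
    [DecidableRel G.Adj] (hconn : G.Connected) (hacyc : G.IsAcyclic)
    (S : Finset V) (hind : ∀ u ∈ S, ∀ v ∈ S, ¬ G.Adj u v) :
    Nat.card (G.induce ((↑S : Set V)ᶜ)).ConnectedComponent + S.card
      = ∑ v ∈ S, G.degree v + 1 := by
  classical
  have hindacyc : (G.induce ((↑S : Set V)ᶜ)).IsAcyclic := by
    intro a c hc
    exact hacyc (c.map (SimpleGraph.Embedding.induce (G := G) ((↑S : Set V)ᶜ)).toHom)
      (hc.map (SimpleGraph.Embedding.induce (G := G) ((↑S : Set V)ᶜ)).injective)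
  have heuler := euler_forest (Nat.card (G.induce ((↑S : Set V)ᶜ)).edgeSet)
    (G.induce ((↑S : Set V)ᶜ)) rfl hindacyc
  have hedges := induced_edges G S hind
  have htree : Nat.card G.edgeSet + 1 = Fintype.card V := by
    have h := SimpleGraph.IsTree.card_edgeFinset (G := G) ⟨hconn, hacyc⟩
    rwa [Nat.card_eq_fintype_card, ← SimpleGraph.edgeFinset_card]
  have hcompl : Fintype.card ((↑S : Set V)ᶜ : Set V) + S.card = Fintype.card V := by
    have h1 : Fintype.card ((↑S : Set V)ᶜ : Set V) = Fintype.card {x : V // x ∉ S} :=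
      Fintype.card_congr (Equiv.subtypeEquivRight (fun x => by simp))
    rw [h1, Fintype.card_subtype]
    have : Finset.filter (fun x => x ∉ S) Finset.univ = Finset.univ \ S := by
      ext x; simp
    rw [this, Finset.card_sdiff_add_card_eq_card (Finset.subset_univ S), Finset.card_univ]
  omega


/-- If `T` and `T'` are trees (each with at least two vertices, and in each no
two essential vertices are adjacent) with a degree-preserving bijection between their sets of
essential vertices, then for every `i` not exceeding the number of essential vertices of `T`,
the maximum over `i`-element sets `S` of essential vertices of the number of connected
components of `T − S` equals the corresponding maximum for `T'`. -/
theorem stmt_3 {V V' : Type*} [Fintype V] [Fintype V'] [DecidableEq V] [DecidableEq V']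
    (T : SimpleGraph V) (T' : SimpleGraph V')
    [DecidableRel T.Adj] [DecidableRel T'.Adj]
    (hTconn : T.Connected) (hTacyc : T.IsAcyclic) (hTcard : 2 ≤ Fintype.card V)
    (hT'conn : T'.Connected) (hT'acyc : T'.IsAcyclic) (hT'card : 2 ≤ Fintype.card V')
    (hTadj : ∀ u v : V, 3 ≤ T.degree u → 3 ≤ T.degree v → ¬ T.Adj u v)
    (hT'adj : ∀ u v : V', 3 ≤ T'.degree u → 3 ≤ T'.degree v → ¬ T'.Adj u v)
    (φ : {v : V // 3 ≤ T.degree v} → {w : V' // 3 ≤ T'.degree w})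
    (hφ : Function.Bijective φ)
    (hdeg : ∀ v : {v : V // 3 ≤ T.degree v}, T'.degree (φ v).1 = T.degree v.1)
    (i : ℕ) (hi : i ≤ Fintype.card {v : V // 3 ≤ T.degree v}) :
    ((Finset.univ.filter (fun v : V => 3 ≤ T.degree v)).powersetCard i).sup
        (fun S => Nat.card (T.induce ((↑S : Set V)ᶜ)).ConnectedComponent)
      = ((Finset.univ.filter (fun w : V' => 3 ≤ T'.degree w)).powersetCard i).sup
        (fun S => Nat.card (T'.induce ((↑S : Set V')ᶜ)).ConnectedComponent) := by
  classical
  have key : ∀ S ∈ (Finset.univ.filter (fun v : V => 3 ≤ T.degree v)).powersetCard i,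
      Nat.card (T.induce ((↑S : Set V)ᶜ)).ConnectedComponent
        = ∑ v ∈ S, T.degree v + 1 - i := by
    intro S hS
    rw [Finset.mem_powersetCard] at hS
    have hess : ∀ v ∈ S, 3 ≤ T.degree v := fun v hv => (Finset.mem_filter.mp (hS.1 hv)).2
    have hind : ∀ u ∈ S, ∀ v ∈ S, ¬ T.Adj u v :=
      fun u hu v hv => hTadj u v (hess u hu) (hess v hv)
    have hc := comp_count T hTconn hTacyc S hind
    have hcard := hS.2
    omega
  have key' : ∀ S ∈ (Finset.univ.filter (fun w : V' => 3 ≤ T'.degree w)).powersetCard i,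
      Nat.card (T'.induce ((↑S : Set V')ᶜ)).ConnectedComponent
        = ∑ v ∈ S, T'.degree v + 1 - i := by
    intro S hS
    rw [Finset.mem_powersetCard] at hS
    have hess : ∀ v ∈ S, 3 ≤ T'.degree v := fun v hv => (Finset.mem_filter.mp (hS.1 hv)).2
    have hind : ∀ u ∈ S, ∀ v ∈ S, ¬ T'.Adj u v :=
      fun u hu v hv => hT'adj u v (hess u hu) (hess v hv)
    have hc := comp_count T' hT'conn hT'acyc S hind
    have hcard := hS.2
    omega
  rw [Finset.sup_congr rfl key, Finset.sup_congr rfl key']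
  have hPT : (Finset.univ.filter (fun v : V => 3 ≤ T.degree v)) =
      Finset.univ.map (Function.Embedding.subtype (fun v => 3 ≤ T.degree v)) :=
    (Finset.univ_map_subtype _).symm
  have hPT' : (Finset.univ.filter (fun w : V' => 3 ≤ T'.degree w)) =
      Finset.univ.map (Function.Embedding.subtype (fun w => 3 ≤ T'.degree w)) :=
    (Finset.univ_map_subtype _).symm
  rw [hPT, hPT', Finset.powersetCard_map, Finset.powersetCard_map,
    Finset.sup_map, Finset.sup_map]
  set e : {v : V // 3 ≤ T.degree v} ≃ {w : V' // 3 ≤ T'.degree w} := Equiv.ofBijective φ hφ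
    with he
  rw [show (Finset.univ : Finset {w : V' // 3 ≤ T'.degree w})
      = Finset.univ.map e.toEmbedding from (Finset.map_univ_equiv e).symm,
    Finset.powersetCard_map, Finset.sup_map]
  apply Finset.sup_congr rfl
  intro A _
  simp only [Function.comp_apply, RelEmbedding.coe_toEmbedding, Finset.mapEmbedding_apply,
    Finset.map_map, Finset.sum_map, Function.Embedding.coe_subtype,
    Function.Embedding.trans_apply, Equiv.coe_toEmbedding]
  congr 1
  congr 1
  exact Finset.sum_congr rfl fun v _ => (hdeg v).symm
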